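/- With the intertwiners Φ = x_n t_{s_{n−1}} t_{s_{n−2}} ⋯ t_{s_1} and Ψ = y_1 t_{s_1} t_{s_2} ⋯ t_{s_{n−1}} in H: Ψ Φ = z_1 and Φ Ψ = z_n − κ + Σ_{j=0}^{r−1} (d_j − d_{j−1}) ε_{nj}. -/

import Mathlib

/-- `ζ = e^{2πi/r}`. -/
noncomputable def zeta (r : ℕ) : ℂ := Complex.exp (2 * Real.pi * Complex.I / r)

theorem zeta_pow_self {r : ℕ} (hr : 0 < r) : zeta r ^ r = 1 := by
  rw [zeta, ← Complex.exp_nat_mul, mul_comm, div_mul_cancel₀, Complex.exp_two_pi_mul_I]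
  exact_mod_cast Nat.cast_ne_zero.mpr hr.ne'

theorem zeta_zpow_root (r : ℕ) (l : ℤ) : (zeta r ^ l) ^ r = 1 := by
  rcases Nat.eq_zero_or_pos r with h | h
  · rw [h, pow_zero]
  · rw [← zpow_natCast, ← zpow_mul, mul_comm, zpow_mul, zpow_natCast,
      zeta_pow_self h, one_zpow]

/-- The elements of `G(r,1,n)`: `n × n` monomial matrices whose nonzero entries are
`r`-th roots of unity. -/
def IsGMonomial (r n : ℕ) (w : Matrix (Fin n) (Fin n) ℂ) : Prop :=
  ∃ (σ : Equiv.Perm (Fin n)) (a : Fin n → ℂ), (∀ i, a i ^ r = 1) ∧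
    ∀ i j, w i j = if i = σ j then a j else 0

theorem IsGMonomial.mul {r n : ℕ} {w v : Matrix (Fin n) (Fin n) ℂ}
    (hw : IsGMonomial r n w) (hv : IsGMonomial r n v) : IsGMonomial r n (w * v) := by
  obtain ⟨σ, a, ha, hwe⟩ := hw
  obtain ⟨τ, b, hb, hve⟩ := hv
  refine ⟨σ * τ, fun j => a (τ j) * b j, fun j => by rw [mul_pow, ha, hb, one_mul], ?_⟩
  intro i j
  rw [Matrix.mul_apply, Finset.sum_eq_single (τ j)]
  · rw [hwe, hve, if_pos rfl, Equiv.Perm.mul_apply]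
    simp [ite_mul]
  · intro k _ hk
    rw [hve, if_neg hk, mul_zero]
  · simp

/-- The diagonal matrix `ζ_i^l`, with `ζ^l` in position `i` and `1`'s elsewhere. -/
noncomputable def zmat (r n : ℕ) (i : Fin n) (l : ℤ) : Matrix (Fin n) (Fin n) ℂ :=
  Matrix.diagonal (fun a => if a = i then zeta r ^ l else 1)

theorem isGMonomial_zmat (r : ℕ) {n : ℕ} (i : Fin n) (l : ℤ) :
    IsGMonomial r n (zmat r n i l) := by
  refine ⟨1, fun b => if b = i then zeta r ^ l else 1, ?_, ?_⟩
  · intro b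
    dsimp only
    split
    · exact zeta_zpow_root r l
    · exact one_pow r
  · intro a b
    rcases eq_or_ne a b with h | h
    · subst h; simp [zmat, Matrix.diagonal_apply]
    · simp [zmat, Matrix.diagonal_apply_ne _ h, Equiv.Perm.one_apply, h]

/-- The transposition (permutation) matrix `s_{ij}` interchanging coordinates `i` and `j`. -/
def smat {n : ℕ} (i j : Fin n) : Matrix (Fin n) (Fin n) ℂ :=
  Matrix.of fun a b => if a = Equiv.swap i j b then 1 else 0

theorem isGMonomial_smat (r : ℕ) {n : ℕ} (i j : Fin n) : IsGMonomial r n (smat i j) :=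
  ⟨Equiv.swap i j, fun _ => 1, fun _ => one_pow r, fun a b => by simp [smat]⟩

/-- The group `G(r,1,n)` of monomial matrices, as a subtype of matrices. -/
def GMon (r n : ℕ) : Type := {w : Matrix (Fin n) (Fin n) ℂ // IsGMonomial r n w}

/-- `ζ_i^l` as an element of `G(r,1,n)`. -/
noncomputable def zetaW (r : ℕ) {n : ℕ} (i : Fin n) (l : ℤ) : GMon r n :=
  ⟨zmat r n i l, isGMonomial_zmat r i l⟩

/-- `s_{ij}` as an element of `G(r,1,n)`. -/
noncomputable def sW (r : ℕ) {n : ℕ} (i j : Fin n) : GMon r n :=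
  ⟨smat i j, isGMonomial_smat r i j⟩

/-- The reflection `ζ_i^l s_{ij} ζ_i^{-l}` as an element of `G(r,1,n)`. -/
noncomputable def reflW (r : ℕ) {n : ℕ} (i j : Fin n) (l : ℤ) : GMon r n :=
  ⟨zmat r n i l * smat i j * zmat r n i (-l),
    ((isGMonomial_zmat r i l).mul (isGMonomial_smat r i j)).mul (isGMonomial_zmat r i (-l))⟩

/-- The element `ζ_i^l ζ_j^{-l}` of `G(r,1,n)`. -/
noncomputable def pairW (r : ℕ) {n : ℕ} (i j : Fin n) (l : ℤ) : GMon r n :=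
  ⟨zmat r n i l * zmat r n j (-l),
    (isGMonomial_zmat r i l).mul (isGMonomial_zmat r j (-l))⟩

/-- Generators of the rational Cherednik algebra of `G(r,1,n)`:
`x_1, …, x_n`, `y_1, …, y_n` and `t_w` for `w ∈ G(r,1,n)`. -/
inductive CGen (r n : ℕ) where
  | X (i : Fin n) : CGen r n
  | Y (i : Fin n) : CGen r n
  | T (w : GMon r n) : CGen r n

/-- The defining relations of the rational Cherednik algebra of `G(r,1,n)` with
parameters `κ, c₀, c_1, …, c_{r-1}`. -/
inductive CRel (r n : ℕ) (κ c₀ : ℂ) (c : ℕ → ℂ) :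
    FreeAlgebra ℂ (CGen r n) → FreeAlgebra ℂ (CGen r n) → Prop
  | t_mul (u w v : GMon r n) : u.1 = w.1 * v.1 → CRel r n κ c₀ c
      (FreeAlgebra.ι ℂ (.T u)) (FreeAlgebra.ι ℂ (.T w) * FreeAlgebra.ι ℂ (.T v))
  | t_one (u : GMon r n) : u.1 = 1 → CRel r n κ c₀ c (FreeAlgebra.ι ℂ (.T u)) 1
  | t_x (w : GMon r n) (i : Fin n) : CRel r n κ c₀ c
      (FreeAlgebra.ι ℂ (.T w) * FreeAlgebra.ι ℂ (.X i))
      (∑ j, (w.1⁻¹ i j) • (FreeAlgebra.ι ℂ (.X j) * FreeAlgebra.ι ℂ (.T w)))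
  | t_y (w : GMon r n) (i : Fin n) : CRel r n κ c₀ c
      (FreeAlgebra.ι ℂ (.T w) * FreeAlgebra.ι ℂ (.Y i))
      (∑ j, (w.1 j i) • (FreeAlgebra.ι ℂ (.Y j) * FreeAlgebra.ι ℂ (.T w)))
  | xx (i j : Fin n) : CRel r n κ c₀ c
      (FreeAlgebra.ι ℂ (.X i) * FreeAlgebra.ι ℂ (.X j))
      (FreeAlgebra.ι ℂ (.X j) * FreeAlgebra.ι ℂ (.X i))
  | yy (i j : Fin n) : CRel r n κ c₀ c
      (FreeAlgebra.ι ℂ (.Y i) * FreeAlgebra.ι ℂ (.Y j))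
      (FreeAlgebra.ι ℂ (.Y j) * FreeAlgebra.ι ℂ (.Y i))
  | yx_ne (i j : Fin n) : i ≠ j → CRel r n κ c₀ c
      (FreeAlgebra.ι ℂ (.Y i) * FreeAlgebra.ι ℂ (.X j))
      (FreeAlgebra.ι ℂ (.X j) * FreeAlgebra.ι ℂ (.Y i) +
        c₀ • ∑ l ∈ Finset.range r,
          (zeta r ^ (-(l : ℤ))) • FreeAlgebra.ι ℂ (.T (reflW r i j (l : ℤ))))
  | yx_eq (i : Fin n) : CRel r n κ c₀ c
      (FreeAlgebra.ι ℂ (.Y i) * FreeAlgebra.ι ℂ (.X i))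
      (FreeAlgebra.ι ℂ (.X i) * FreeAlgebra.ι ℂ (.Y i) + κ • (1 : FreeAlgebra ℂ (CGen r n))
        - ∑ l ∈ Finset.Ico 1 r,
            (c l * (1 - zeta r ^ (-(l : ℤ)))) • FreeAlgebra.ι ℂ (.T (zetaW r i (l : ℤ)))
        - c₀ • ∑ j ∈ Finset.univ.erase i, ∑ l ∈ Finset.range r,
            FreeAlgebra.ι ℂ (.T (reflW r i j (l : ℤ))))

variable (r n : ℕ) (κ c₀ : ℂ) (c : ℕ → ℂ)

/-- The image of `x_i` in the rational Cherednik algebra of `G(r,1,n)`. -/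
noncomputable def cX (i : Fin n) : RingQuot (CRel r n κ c₀ c) :=
  RingQuot.mkAlgHom ℂ (CRel r n κ c₀ c) (FreeAlgebra.ι ℂ (.X i))

/-- The image of `y_i` in the rational Cherednik algebra of `G(r,1,n)`. -/
noncomputable def cY (i : Fin n) : RingQuot (CRel r n κ c₀ c) :=
  RingQuot.mkAlgHom ℂ (CRel r n κ c₀ c) (FreeAlgebra.ι ℂ (.Y i))

/-- The image of `t_w` in the rational Cherednik algebra of `G(r,1,n)`. -/
noncomputable def cT (w : GMon r n) : RingQuot (CRel r n κ c₀ c) :=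
  RingQuot.mkAlgHom ℂ (CRel r n κ c₀ c) (FreeAlgebra.ι ℂ (.T w))

/-- `φ_i = Σ_{j<i} Σ_{l=0}^{r-1} t_{ζ_i^l s_{ij} ζ_i^{-l}}`. -/
noncomputable def cPhi (i : Fin n) : RingQuot (CRel r n κ c₀ c) :=
  ∑ j ∈ Finset.univ.filter (fun j : Fin n => j < i), ∑ l ∈ Finset.range r,
    cT r n κ c₀ c (reflW r i j (l : ℤ))

/-- The Dunkl–Opdam–Cherednik element `z_i = y_i x_i + c₀ φ_i`. -/
noncomputable def cz (i : Fin n) : RingQuot (CRel r n κ c₀ c) :=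
  cY r n κ c₀ c i * cX r n κ c₀ c i + c₀ • cPhi r n κ c₀ c i

/-- `π_i = Σ_{l=0}^{r-1} t_{ζ_i^l ζ_{i+1}^{-l}}` (here with the two indices `i`, `i+1`
passed separately). -/
noncomputable def cPi (i j : Fin n) : RingQuot (CRel r n κ c₀ c) :=
  ∑ l ∈ Finset.range r, cT r n κ c₀ c (pairW r i j (l : ℤ))

/-- The idempotent `ε_{ij} = (1/r) Σ_{l=0}^{r-1} ζ^{-lj} t_{ζ_i^l}`. -/
noncomputable def cEps (i : Fin n) (j : ℤ) : RingQuot (CRel r n κ c₀ c) :=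
  (r : ℂ)⁻¹ • ∑ l ∈ Finset.range r, (zeta r ^ (-(l : ℤ) * j)) • cT r n κ c₀ c (zetaW r i (l : ℤ))

/-- The reparametrised constants `d_j = Σ_{l=1}^{r-1} ζ^{lj} c_l`. -/
noncomputable def dpar (j : ℤ) : ℂ := ∑ l ∈ Finset.Ico 1 r, zeta r ^ ((l : ℤ) * j) * c l

variable (m : ℕ)

/-- The intertwiner `Φ = x_n t_{s_{n-1}} t_{s_{n-2}} ⋯ t_{s_1}` (with `n = m + 2`). -/
noncomputable def cPhiOp : RingQuot (CRel r (m + 2) κ c₀ c) :=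
  cX r (m + 2) κ c₀ c (Fin.last (m + 1)) *
    ((List.ofFn fun k : Fin (m + 1) =>
      cT r (m + 2) κ c₀ c (sW r k.castSucc k.succ)).reverse).prod

/-- The intertwiner `Ψ = y_1 t_{s_1} t_{s_2} ⋯ t_{s_{n-1}}` (with `n = m + 2`). -/
noncomputable def cPsiOp : RingQuot (CRel r (m + 2) κ c₀ c) :=
  cY r (m + 2) κ c₀ c 0 *
    (List.ofFn fun k : Fin (m + 1) =>
      cT r (m + 2) κ c₀ c (sW r k.castSucc k.succ)).prod

/-! ### Auxiliary lemmas -/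

theorem smat_mul_smat {n : ℕ} (i j : Fin n) : smat i j * smat i j = 1 := by
  ext a b
  rw [Matrix.mul_apply, Finset.sum_eq_single (Equiv.swap i j b)]
  · simp [smat, Matrix.one_apply, Equiv.swap_apply_self]
  · intro k _ hk
    simp [smat, hk]
  · simp

theorem smat_inv {n : ℕ} (i j : Fin n) : (smat i j)⁻¹ = smat i j :=
  Matrix.inv_eq_right_inv (smat_mul_smat i j)

/-- The identity element of `G(r,1,n)`. -/
def oneW (r n : ℕ) : GMon r n :=
  ⟨1, 1, fun _ => 1, fun _ => one_pow r, fun i j => by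
    by_cases h : i = j <;> simp [Matrix.one_apply, Equiv.Perm.one_apply, h]⟩

theorem cT_oneW : cT r n κ c₀ c (oneW r n) = 1 := by
  have h := RingQuot.mkAlgHom_rel (S := ℂ)
    (CRel.t_one (κ := κ) (c₀ := c₀) (c := c) (oneW r n) rfl)
  simpa [cT] using h

theorem cT_s_sq (a b : Fin n) :
    cT r n κ c₀ c (sW r a b) * cT r n κ c₀ c (sW r a b) = 1 := by
  have h := RingQuot.mkAlgHom_rel (S := ℂ)
    (CRel.t_mul (κ := κ) (c₀ := c₀) (c := c) (oneW r n) (sW r a b) (sW r a b)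
      (smat_mul_smat a b).symm)
  rw [map_mul] at h
  have h1 : cT r n κ c₀ c (oneW r n)
      = cT r n κ c₀ c (sW r a b) * cT r n κ c₀ c (sW r a b) := h
  rw [← h1, cT_oneW]

theorem stepX (a b i : Fin n) :
    cT r n κ c₀ c (sW r a b) * cX r n κ c₀ c i
      = cX r n κ c₀ c (Equiv.swap a b i) * cT r n κ c₀ c (sW r a b) := by
  have h := RingQuot.mkAlgHom_rel (S := ℂ)
    (CRel.t_x (κ := κ) (c₀ := c₀) (c := c) (sW r a b) i)
  rw [map_mul, map_sum] at h
  have h2 : (cT r n κ c₀ c (sW r a b) * cX r n κ c₀ c i : RingQuot (CRel r n κ c₀ c))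
      = ∑ j, RingQuot.mkAlgHom ℂ (CRel r n κ c₀ c)
          (((sW r a b).1⁻¹ i j) • (FreeAlgebra.ι ℂ (.X j) * FreeAlgebra.ι ℂ (.T (sW r a b)))) := h
  rw [h2, Finset.sum_eq_single (Equiv.swap a b i)]
  · have hc : (sW r a b).1⁻¹ i (Equiv.swap a b i) = 1 := by
      rw [show (sW r a b).1 = smat a b from rfl, smat_inv]
      simp [smat, Equiv.swap_apply_self]
    rw [map_smul, hc, one_smul, map_mul]
    rfl
  · intro j _ hj
    have hne : i ≠ Equiv.swap a b j := by
      intro he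
      exact hj (by rw [he, Equiv.swap_apply_self])
    have hc : (sW r a b).1⁻¹ i j = 0 := by
      rw [show (sW r a b).1 = smat a b from rfl, smat_inv]
      simp [smat, hne]
    rw [map_smul, hc, zero_smul]
  · simp

theorem stepY (a b i : Fin n) :
    cT r n κ c₀ c (sW r a b) * cY r n κ c₀ c i
      = cY r n κ c₀ c (Equiv.swap a b i) * cT r n κ c₀ c (sW r a b) := by
  have h := RingQuot.mkAlgHom_rel (S := ℂ)
    (CRel.t_y (κ := κ) (c₀ := c₀) (c := c) (sW r a b) i)
  rw [map_mul, map_sum] at h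
  have h2 : (cT r n κ c₀ c (sW r a b) * cY r n κ c₀ c i : RingQuot (CRel r n κ c₀ c))
      = ∑ j, RingQuot.mkAlgHom ℂ (CRel r n κ c₀ c)
          (((sW r a b).1 j i) • (FreeAlgebra.ι ℂ (.Y j) * FreeAlgebra.ι ℂ (.T (sW r a b)))) := h
  rw [h2, Finset.sum_eq_single (Equiv.swap a b i)]
  · have hc : (sW r a b).1 (Equiv.swap a b i) i = 1 := by
      simp [sW, smat]
    rw [map_smul, hc, one_smul, map_mul]
    rfl
  · intro j _ hj
    have hc : (sW r a b).1 j i = 0 := by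
      simp [sW, smat, hj]
    rw [map_smul, hc, zero_smul]
  · simp
theorem list_move {M : Type*} [Monoid M] {α β : Type*} (F : α → M) (g : α → Equiv.Perm β)
    (X : β → M) (h : ∀ a i, F a * X i = X (g a i) * F a) :
    ∀ (ks : List α) (i : β), (ks.map F).prod * X i = X (((ks.map g).prod) i) * (ks.map F).prod
  | [], i => by simp
  | a :: ks, i => by
    simp only [List.map_cons, List.prod_cons, Equiv.Perm.mul_apply, mul_assoc]
    rw [list_move F g X h ks i, ← mul_assoc, h, mul_assoc]

theorem list_collapse {M : Type*} [Monoid M] {α : Type*} (F : α → M) (h : ∀ a, F a * F a = 1) :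
    ∀ ks : List α, (ks.map F).prod * ((ks.map F).reverse).prod = 1 ∧
      ((ks.map F).reverse).prod * (ks.map F).prod = 1
  | [] => by simp
  | a :: ks => by
    obtain ⟨ih1, ih2⟩ := list_collapse F h ks
    simp only [List.map_cons, List.prod_cons, List.reverse_cons, List.prod_append,
      List.prod_cons, List.prod_nil, mul_one]
    constructor
    · rw [mul_assoc, ← mul_assoc ((ks.map F).prod), ih1, one_mul, h]
    · rw [mul_assoc, ← mul_assoc (F a), h, one_mul, ih2]

theorem swap_castSucc_prod_apply {m : ℕ} :
    ∀ (ks : List (Fin (m + 1))) (x : Fin (m + 2)),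
    ((ks.map (fun k : Fin (m + 1) =>
        Equiv.swap k.castSucc.castSucc k.succ.castSucc)).prod) x.castSucc
      = (((ks.map (fun k : Fin (m + 1) => Equiv.swap k.castSucc k.succ)).prod) x).castSucc
  | [], x => by simp
  | a :: ks, x => by
    simp only [List.map_cons, List.prod_cons, Equiv.Perm.mul_apply]
    rw [swap_castSucc_prod_apply ks x,
      (Fin.castSucc_injective (m + 2)).swap_apply]

theorem perm_last : ∀ m : ℕ,
    (((List.finRange (m + 1)).map
      (fun k : Fin (m + 1) => Equiv.swap k.castSucc k.succ)).prod) (Fin.last (m + 1)) = 0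
  | 0 => by decide
  | (m + 1) => by
    rw [List.finRange_succ_last, List.map_append, List.map_map, List.prod_append]
    simp only [List.map_cons, List.map_nil, List.prod_cons, List.prod_nil, mul_one]
    rw [Equiv.Perm.mul_apply, Fin.succ_last, Equiv.swap_apply_right]
    have hcomp : ((fun k : Fin (m + 2) => Equiv.swap k.castSucc k.succ) ∘ Fin.castSucc)
        = fun k : Fin (m + 1) => Equiv.swap k.castSucc.castSucc k.succ.castSucc := by
      funext k
      simp only [Function.comp, Fin.succ_castSucc]
    rw [hcomp, swap_castSucc_prod_apply, perm_last m, Fin.castSucc_zero]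
theorem zeta_ne_zero (r : ℕ) : zeta r ≠ 0 := Complex.exp_ne_zero _

theorem zeta_prim (hr : 1 ≤ r) : IsPrimitiveRoot (zeta r) r := by
  have := Complex.isPrimitiveRoot_exp r (by omega)
  exact this

theorem geo (hr : 1 ≤ r) {k l : ℕ} (hk : k < r) (hl : l < r) :
    ∑ j ∈ Finset.range r, (zeta r ^ ((k : ℤ) - (l : ℤ))) ^ j
      = if k = l then (r : ℂ) else 0 := by
  rcases eq_or_ne k l with h | h
  · subst h
    simp
  · rw [if_neg h]
    have hω : zeta r ^ ((k : ℤ) - (l : ℤ)) ≠ 1 := by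
      intro h1
      have hdvd := ((zeta_prim r hr).zpow_eq_one_iff_dvd _).mp h1
      have h0 : (k : ℤ) - (l : ℤ) = 0 := by
        refine Int.eq_zero_of_abs_lt_dvd hdvd ?_
        rw [abs_sub_lt_iff]
        constructor <;> omega
      exact h (by omega)
    rw [geom_sum_eq hω, zeta_zpow_root, sub_self, zero_div]

theorem scalar_lemma (hr : 1 ≤ r) {l : ℕ} (hl : l < r) :
    ∑ j ∈ Finset.range r,
        (dpar r c (j : ℤ) - dpar r c ((j : ℤ) - 1)) * ((r : ℂ)⁻¹ * zeta r ^ (-(l : ℤ) * (j : ℤ)))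
      = c l * (1 - zeta r ^ (-(l : ℤ))) := by
  have hζ : zeta r ≠ 0 := zeta_ne_zero r
  have step1 : ∀ j ∈ Finset.range r,
      (dpar r c (j : ℤ) - dpar r c ((j : ℤ) - 1)) * ((r : ℂ)⁻¹ * zeta r ^ (-(l : ℤ) * (j : ℤ)))
        = ∑ k ∈ Finset.Ico 1 r,
            (r : ℂ)⁻¹ * (c k * (1 - zeta r ^ (-(k : ℤ)))) * (zeta r ^ ((k : ℤ) - (l : ℤ))) ^ j := by
    intro j _
    rw [dpar, dpar, ← Finset.sum_sub_distrib, Finset.sum_mul]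
    refine Finset.sum_congr rfl fun k _ => ?_
    have h1 : zeta r ^ ((k : ℤ) * ((j : ℤ) - 1))
        = zeta r ^ ((k : ℤ) * (j : ℤ)) * zeta r ^ (-(k : ℤ)) := by
      rw [← zpow_add₀ hζ]
      congr 1
      ring
    have h2 : (zeta r ^ ((k : ℤ) - (l : ℤ))) ^ j
        = zeta r ^ ((k : ℤ) * (j : ℤ)) * zeta r ^ (-(l : ℤ) * (j : ℤ)) := by
      rw [← zpow_natCast (zeta r ^ ((k : ℤ) - (l : ℤ))) j, ← zpow_mul, ← zpow_add₀ hζ]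
      congr 1
      ring
    rw [h1, h2]
    ring
  rw [Finset.sum_congr rfl step1, Finset.sum_comm]
  have step2 : ∀ k ∈ Finset.Ico 1 r,
      ∑ j ∈ Finset.range r,
          (r : ℂ)⁻¹ * (c k * (1 - zeta r ^ (-(k : ℤ)))) * (zeta r ^ ((k : ℤ) - (l : ℤ))) ^ j
        = if k = l then (r : ℂ)⁻¹ * (c k * (1 - zeta r ^ (-(k : ℤ)))) * r else 0 := by
    intro k hk
    rw [← Finset.mul_sum, geo r hr (Finset.mem_Ico.mp hk).2 hl]
    split <;> simp
  rw [Finset.sum_congr rfl step2, Finset.sum_ite_eq' (Finset.Ico 1 r)]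
  have hr0 : (r : ℂ) ≠ 0 := by
    exact_mod_cast Nat.cast_ne_zero.mpr (by omega)
  rcases Nat.eq_zero_or_pos l with h0 | h1
  · subst h0
    rw [if_neg (by simp)]
    simp
  · rw [if_pos (Finset.mem_Ico.mpr ⟨h1, hl⟩)]
    field_simp
theorem key_sum (hr : 1 ≤ r) (i : Fin n) :
    ∑ j ∈ Finset.range r,
        (dpar r c (j : ℤ) - dpar r c ((j : ℤ) - 1)) • cEps r n κ c₀ c i (j : ℤ)
      = ∑ l ∈ Finset.Ico 1 r,
          (c l * (1 - zeta r ^ (-(l : ℤ)))) • cT r n κ c₀ c (zetaW r i (l : ℤ)) := by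
  have hsub : Finset.Ico 1 r ⊆ Finset.range r := fun x hx =>
    Finset.mem_range.mpr (Finset.mem_Ico.mp hx).2
  rw [Finset.sum_subset hsub (fun x hx hnx => by
    have hx0 : x = 0 := by
      rw [Finset.mem_range] at hx
      rw [Finset.mem_Ico] at hnx
      omega
    subst hx0
    simp)]
  simp only [cEps, Finset.smul_sum, smul_smul]
  rw [Finset.sum_comm]
  refine Finset.sum_congr rfl fun l hl => ?_
  rw [← Finset.sum_smul]
  congr 1
  exact scalar_lemma r c hr (Finset.mem_range.mp hl)
theorem prodT_hyps :
    (∀ a : Fin (m + 1), cT r (m + 2) κ c₀ c (sW r a.castSucc a.succ) *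
        cT r (m + 2) κ c₀ c (sW r a.castSucc a.succ) = 1) :=
  fun a => cT_s_sq r (m + 2) κ c₀ c a.castSucc a.succ

/-- `Ψ Φ = z_1` and `Φ Ψ = z_n - κ + Σ_j (d_j - d_{j-1}) ε_{nj}`. -/
theorem stmt11 (hr : 1 ≤ r) :
    cPsiOp r κ c₀ c m * cPhiOp r κ c₀ c m = cz r (m + 2) κ c₀ c 0
    ∧ cPhiOp r κ c₀ c m * cPsiOp r κ c₀ c m =
        cz r (m + 2) κ c₀ c (Fin.last (m + 1)) - κ • 1 +
          ∑ j ∈ Finset.range r,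
            (dpar r c (j : ℤ) - dpar r c ((j : ℤ) - 1)) • cEps r (m + 2) κ c₀ c (Fin.last (m + 1)) (j : ℤ) := by
  classical
  set Tf : Fin (m + 1) → RingQuot (CRel r (m + 2) κ c₀ c) :=
    fun k => cT r (m + 2) κ c₀ c (sW r k.castSucc k.succ) with hTf
  set pf : Fin (m + 1) → Equiv.Perm (Fin (m + 2)) :=
    fun k => Equiv.swap k.castSucc k.succ with hpf
  have hTT : ∀ a, Tf a * Tf a = 1 := prodT_hyps r κ c₀ c m
  have hpp : ∀ a, pf a * pf a = 1 := fun a => Equiv.swap_mul_self _ _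
  have hmoveX : ∀ (a : Fin (m + 1)) (i : Fin (m + 2)),
      Tf a * cX r (m + 2) κ c₀ c i = cX r (m + 2) κ c₀ c (pf a i) * Tf a :=
    fun a i => stepX r (m + 2) κ c₀ c a.castSucc a.succ i
  have hmoveY : ∀ (a : Fin (m + 1)) (i : Fin (m + 2)),
      Tf a * cY r (m + 2) κ c₀ c i = cY r (m + 2) κ c₀ c (pf a i) * Tf a :=
    fun a i => stepY r (m + 2) κ c₀ c a.castSucc a.succ i
  set L : List (RingQuot (CRel r (m + 2) κ c₀ c)) := (List.finRange (m + 1)).map Tf with hL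
  have hplast : (((List.finRange (m + 1)).map pf).prod) (Fin.last (m + 1)) = 0 := perm_last m
  have hrev0 : ((((List.finRange (m + 1)).map pf).reverse).prod) (0 : Fin (m + 2))
      = Fin.last (m + 1) := by
    have hc := (list_collapse pf hpp (List.finRange (m + 1))).2
    calc ((((List.finRange (m + 1)).map pf).reverse).prod) (0 : Fin (m + 2))
        = ((((List.finRange (m + 1)).map pf).reverse).prod)
            ((((List.finRange (m + 1)).map pf).prod) (Fin.last (m + 1))) := by rw [hplast]
      _ = (((((List.finRange (m + 1)).map pf).reverse).prod) *
            (((List.finRange (m + 1)).map pf).prod)) (Fin.last (m + 1)) := rfl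
      _ = Fin.last (m + 1) := by rw [hc]; rfl
  have hPsi : cPsiOp r κ c₀ c m = cY r (m + 2) κ c₀ c 0 * L.prod := by
    rw [cPsiOp, List.ofFn_eq_map]
  have hPhi : cPhiOp r κ c₀ c m = cX r (m + 2) κ c₀ c (Fin.last (m + 1)) * L.reverse.prod := by
    rw [cPhiOp, List.ofFn_eq_map]
  have hmove1 : L.prod * cX r (m + 2) κ c₀ c (Fin.last (m + 1))
      = cX r (m + 2) κ c₀ c 0 * L.prod := by
    have h := list_move Tf pf (cX r (m + 2) κ c₀ c) hmoveX (List.finRange (m + 1))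
      (Fin.last (m + 1))
    rw [hplast] at h
    exact h
  have hrevmap : L.reverse = ((List.finRange (m + 1)).reverse).map Tf := by
    rw [hL, List.map_reverse]
  have hmove2 : L.reverse.prod * cY r (m + 2) κ c₀ c 0
      = cY r (m + 2) κ c₀ c (Fin.last (m + 1)) * L.reverse.prod := by
    have h := list_move Tf pf (cY r (m + 2) κ c₀ c) hmoveY ((List.finRange (m + 1)).reverse)
      (0 : Fin (m + 2))
    rw [List.map_reverse, List.map_reverse, hrev0] at h
    exact h
  have hcol1 : L.prod * L.reverse.prod = 1 := (list_collapse Tf hTT (List.finRange (m + 1))).1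
  have hcol2 : L.reverse.prod * L.prod = 1 := (list_collapse Tf hTT (List.finRange (m + 1))).2
  constructor
  · -- Ψ Φ = z_1
    rw [hPsi, hPhi, mul_assoc, ← mul_assoc L.prod, hmove1, mul_assoc, hcol1, mul_one]
    have hempty : Finset.univ.filter (fun j : Fin (m + 2) => j < 0) = ∅ := by
      ext j
      simp [Fin.not_lt_zero]
    rw [cz, cPhi, hempty, Finset.sum_empty, smul_zero, add_zero]
  · -- Φ Ψ = z_n - κ + Σ
    rw [hPhi, hPsi, mul_assoc, ← mul_assoc L.reverse.prod, hmove2, mul_assoc, hcol2, mul_one]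
    have hyx : cY r (m + 2) κ c₀ c (Fin.last (m + 1)) * cX r (m + 2) κ c₀ c (Fin.last (m + 1))
        = cX r (m + 2) κ c₀ c (Fin.last (m + 1)) * cY r (m + 2) κ c₀ c (Fin.last (m + 1))
            + κ • 1
          - ∑ l ∈ Finset.Ico 1 r, (c l * (1 - zeta r ^ (-(l : ℤ)))) •
              cT r (m + 2) κ c₀ c (zetaW r (Fin.last (m + 1)) (l : ℤ))
          - c₀ • ∑ j ∈ Finset.univ.erase (Fin.last (m + 1)), ∑ l ∈ Finset.range r,
              cT r (m + 2) κ c₀ c (reflW r (Fin.last (m + 1)) j (l : ℤ)) := by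
      have h := RingQuot.mkAlgHom_rel (S := ℂ)
        (CRel.yx_eq (r := r) (n := m + 2) (κ := κ) (c₀ := c₀) (c := c) (Fin.last (m + 1)))
      simpa only [map_mul, map_add, map_sub, map_smul, map_sum, map_one, cX, cY, cT] using h
    have hfe : Finset.univ.filter (fun j : Fin (m + 2) => j < Fin.last (m + 1))
        = Finset.univ.erase (Fin.last (m + 1)) := by
      ext j
      simp [Finset.mem_erase, Fin.lt_last_iff_ne_last]
    rw [key_sum r (m + 2) κ c₀ c hr (Fin.last (m + 1)), cz, cPhi, hfe, hyx]
    abel
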